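/- Let C(ℝ⁺) be the space of continuous real-valued functions on (0,+∞) with the compact-open topology, and let E_K be the equivalence relation on C(ℝ⁺) defined by f E_K g iff lim_{t→+∞}(f(t)−g(t)) = 0. Then E_K is Borel bireducible with ℝ^ℕ/c₀, and E([0,1],0) is Borel bireducible with ℝ^ℕ/c₀. -/

import Mathlib

open Filter Topology MeasureTheory
open scoped ENNReal NNReal

noncomputable section

/-- `E` is Borel reducible to `F`: there is a Borel (measurable) map `θ` such that
`E x y ↔ F (θ x) (θ y)` for all `x, y`. -/
def BorelReducible {α β : Type*} [MeasurableSpace α] [MeasurableSpace β]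
    (E : α → α → Prop) (F : β → β → Prop) : Prop :=
  ∃ θ : α → β, Measurable θ ∧ ∀ x y, E x y ↔ F (θ x) (θ y)

/-- Borel bireducibility: reductions in both directions. -/
def BorelBireducible {α β : Type*} [MeasurableSpace α] [MeasurableSpace β]
    (E : α → α → Prop) (F : β → β → Prop) : Prop :=
  BorelReducible E F ∧ BorelReducible F E

noncomputable instance : MeasurableSpace C(Set.Ioi (0:ℝ), ℝ) := borel _
instance : BorelSpace C(Set.Ioi (0:ℝ), ℝ) := ⟨rfl⟩

namespace EKProof

/-! ### The clip function -/

def clip (r : ℝ) : ℝ := max 0 (min 1 r)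

lemma clip_nonneg (r : ℝ) : 0 ≤ clip r := le_max_left _ _

lemma clip_le_one (r : ℝ) : clip r ≤ 1 := max_le zero_le_one (min_le_left _ _)

lemma clip_mono : Monotone clip := fun a b h => max_le_max le_rfl (min_le_min le_rfl h)

lemma clip_of_nonpos {r : ℝ} (h : r ≤ 0) : clip r = 0 := by
  have : min 1 r ≤ 0 := le_trans (min_le_right _ _) h
  simp [clip, max_eq_left this]

lemma clip_of_one_le {r : ℝ} (h : 1 ≤ r) : clip r = 1 := by
  simp [clip, min_eq_left h]

lemma clip_of_mem {r : ℝ} (h0 : 0 ≤ r) (h1 : r ≤ 1) : clip r = r := by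
  simp [clip, min_eq_right h1, max_eq_right h0]

lemma clip_add_le {a : ℝ} (b : ℝ) (hb : 0 ≤ b) : clip (a + b) ≤ clip a + b := by
  rcases le_total 1 a with h | h
  · have h1 : (1:ℝ) ≤ a + b := le_trans h (by linarith)
    rw [clip_of_one_le h, clip_of_one_le h1]; linarith
  · have hca : 0 ≤ clip a := clip_nonneg a
    apply max_le
    · linarith
    · calc min 1 (a + b) ≤ a + b := min_le_right _ _
        _ = min 1 a + b := by rw [min_eq_right h]
        _ ≤ clip a + b := by have := le_max_right (0:ℝ) (min 1 a); unfold clip; linarith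

lemma clip_lipschitz (a b : ℝ) : |clip a - clip b| ≤ |a - b| := by
  rcases le_total a b with h | h
  · have h1 : clip a ≤ clip b := clip_mono h
    have h2 : clip b ≤ clip a + (b - a) := by
      have := clip_add_le (a := a) (b - a) (by linarith)
      simpa [show a + (b - a) = b by ring] using this
    rw [abs_sub_comm, abs_of_nonneg (by linarith), abs_of_nonpos (by linarith)]
    linarith
  · have h1 : clip b ≤ clip a := clip_mono h
    have h2 : clip a ≤ clip b + (a - b) := by
      have := clip_add_le (a := b) (a - b) (by linarith)
      simpa [show b + (a - b) = a by ring] using this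
    rw [abs_of_nonneg (by linarith), abs_of_nonneg (by linarith)]
    linarith

lemma continuous_clip : Continuous clip :=
  continuous_const.max (continuous_const.min continuous_id)

/-- key pointwise separation lemma for clip-codes -/
lemma clip_sep {a b ε : ℝ} (hε : 0 < ε) (hε1 : ε ≤ 1) (h : ε ≤ b - a) :
    ∃ k : ℤ, ε / 2 ≤ clip (b - k) - clip (a - k) := by
  set k0 : ℤ := ⌊a⌋ with hk0
  have hfl : (k0:ℝ) ≤ a := Int.floor_le a
  have hfl' : a - k0 < 1 := by
    have := Int.lt_floor_add_one a; linarith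
  rcases le_total (a - k0) (1 - ε/2) with hc | hc
  · refine ⟨k0, ?_⟩
    have h1 : clip (a - k0) = a - k0 := clip_of_mem (by linarith) (by linarith)
    have h2 : clip (b - k0) ≥ min 1 (a - k0 + ε) := by
      have : min 1 (a - k0 + ε) ≤ min 1 (b - k0) := min_le_min le_rfl (by linarith)
      exact le_trans this (le_max_right _ _)
    rcases le_total (a - k0 + ε) 1 with hd | hd
    · rw [min_eq_right hd] at h2; rw [h1]; linarith
    · rw [min_eq_left hd] at h2; rw [h1]; linarith
  · refine ⟨k0 + 1, ?_⟩
    have h1 : clip (b - (k0 + 1 : ℤ)) - clip (a - (k0 + 1 : ℤ))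
        = clip (b - (k0 + 1 : ℤ)) := by
      rw [clip_of_nonpos (r := a - ((k0 + 1 : ℤ) : ℝ)) (by push_cast; linarith), sub_zero]
    rw [h1]
    have hb : ε/2 ≤ b - ((k0 + 1 : ℤ) : ℝ) := by push_cast; linarith
    calc ε/2 = min 1 (ε/2) := (min_eq_right (by linarith)).symm
      _ ≤ min 1 (b - ((k0+1:ℤ):ℝ)) := min_le_min le_rfl hb
      _ ≤ _ := le_max_right _ _

lemma clip_sep' {a b ε : ℝ} (hε : 0 < ε) (hε1 : ε ≤ 1) (h : ε ≤ |a - b|) :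
    ∃ k : ℤ, ε / 2 ≤ |clip (a - k) - clip (b - k)| := by
  rcases le_total a b with hab | hab
  · rw [abs_sub_comm, abs_of_nonneg (by linarith)] at h
    obtain ⟨k, hk⟩ := clip_sep hε hε1 h
    exact ⟨k, by rw [abs_sub_comm, abs_of_nonneg (by linarith)]; exact hk⟩
  · rw [abs_of_nonneg (by linarith)] at h
    obtain ⟨k, hk⟩ := clip_sep hε hε1 h
    exact ⟨k, by rw [abs_of_nonneg (by linarith)]; exact hk⟩

/-- if the clips at `k` differ, `k` is in a window determined by `a, b` -/
lemma clip_window {a b : ℝ} {k : ℤ} (h : clip (a - k) ≠ clip (b - k)) :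
    ⌈min a b - 1⌉ ≤ k ∧ k ≤ ⌊max a b⌋ := by
  constructor
  · rw [Int.ceil_le]
    by_contra hlt
    push_neg at hlt
    have h1 : (1:ℝ) ≤ a - k := by
      have : min a b ≤ a := min_le_left _ _; linarith
    have h2 : (1:ℝ) ≤ b - k := by
      have : min a b ≤ b := min_le_right _ _; linarith
    exact h (by rw [clip_of_one_le h1, clip_of_one_le h2])
  · rw [Int.le_floor]
    by_contra hlt
    push_neg at hlt
    have h1 : a - k ≤ 0 := by have : a ≤ max a b := le_max_left _ _; linarith
    have h2 : b - k ≤ 0 := by have : b ≤ max a b := le_max_right _ _; linarith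
    exact h (by rw [clip_of_nonpos h1, clip_of_nonpos h2])

/-! ### cofinite characterization of c₀-convergence -/

lemma tendsto_cofinite_zero_iff {α : Type*} (u : α → ℝ) (hu : ∀ a, 0 ≤ u a) :
    Tendsto u cofinite (𝓝 0) ↔ ∀ ε > 0, {a | ε ≤ u a}.Finite := by
  rw [Metric.tendsto_nhds]
  constructor
  · intro h ε hε
    have := h ε hε
    rw [Filter.eventually_cofinite] at this
    refine this.subset ?_
    intro a ha
    simp only [Set.mem_setOf_eq, Real.dist_eq, sub_zero, not_lt] at *
    rwa [abs_of_nonneg (hu a)]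
  · intro h ε hε
    rw [Filter.eventually_cofinite]
    refine (h ε hε).subset ?_
    intro a ha
    simp only [Set.mem_setOf_eq, Real.dist_eq, sub_zero, not_lt] at *
    rwa [abs_of_nonneg (hu a)] at ha

lemma tendsto_atTop_zero_iff (u : ℕ → ℝ) (hu : ∀ a, 0 ≤ u a) :
    Tendsto u atTop (𝓝 0) ↔ ∀ ε > 0, {a | ε ≤ u a}.Finite := by
  rw [← Nat.cofinite_eq_atTop]; exact tendsto_cofinite_zero_iff u hu


/-! ### the pairing equivalence -/

def eNZ : ℕ ≃ ℕ × ℤ := (Denumerable.eqv (ℕ × ℤ)).symm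

lemma c0_iff_clipped (x y : ℕ → ℝ) :
    Tendsto (fun n => |x n - y n|) atTop (𝓝 0) ↔
      Tendsto (fun m => |clip (x (eNZ m).1 - (eNZ m).2) - clip (y (eNZ m).1 - (eNZ m).2)|)
        atTop (𝓝 0) := by
  set F : ℕ × ℤ → ℝ := fun p => |clip (x p.1 - p.2) - clip (y p.1 - p.2)| with hFdef
  have hF0 : ∀ p, 0 ≤ F p := fun p => abs_nonneg _
  have key : Tendsto (fun n => |x n - y n|) atTop (𝓝 0) ↔ Tendsto F cofinite (𝓝 0) := by
    constructor
    · intro h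
      have hx := (tendsto_atTop_zero_iff _ (fun n => abs_nonneg _)).mp h
      rw [tendsto_cofinite_zero_iff F hF0]
      intro ε hε
      have hS := hx ε hε
      refine Set.Finite.subset (hS.biUnion (fun n _ =>
        ((Set.finite_Icc (⌈min (x n) (y n) - 1⌉) (⌊max (x n) (y n)⌋)).image
          (fun k => (n, k))))) ?_
      intro p hp
      simp only [Set.mem_setOf_eq] at hp
      have h1 : ε ≤ |x p.1 - y p.1| := by
        refine le_trans hp (le_trans (clip_lipschitz _ _) (le_of_eq ?_))
        rw [sub_sub_sub_cancel_right]
      have h2 : clip (x p.1 - p.2) ≠ clip (y p.1 - p.2) := by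
        intro hcc
        rw [hFdef] at hp
        simp only [hcc, sub_self, abs_zero] at hp
        linarith
      obtain ⟨hw1, hw2⟩ := clip_window h2
      refine Set.mem_biUnion h1 ?_
      exact ⟨p.2, Set.mem_Icc.mpr ⟨hw1, hw2⟩, rfl⟩
    · intro hFc
      rw [tendsto_atTop_zero_iff _ (fun n => abs_nonneg _)]
      intro ε hε
      have hε' : 0 < min ε 1 := lt_min hε one_pos
      have hfin : {p | min ε 1 / 2 ≤ F p}.Finite :=
        (tendsto_cofinite_zero_iff F hF0).mp hFc (min ε 1 / 2) (by positivity)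
      refine (hfin.image Prod.fst).subset ?_
      intro n hn
      simp only [Set.mem_setOf_eq] at hn
      obtain ⟨k, hk⟩ := clip_sep' hε' (min_le_right _ _)
        (le_trans (min_le_left _ _) hn)
      exact ⟨(n, k), hk, rfl⟩
  rw [key]
  constructor
  · intro hFc
    have := hFc.comp ((eNZ : ℕ ≃ ℕ × ℤ).injective.tendsto_cofinite)
    rw [Nat.cofinite_eq_atTop] at this
    exact this
  · intro h
    have h' : Tendsto (F ∘ eNZ) cofinite (𝓝 0) := by
      rw [Nat.cofinite_eq_atTop]; exact h
    have h2 := h'.comp ((eNZ.symm).injective.tendsto_cofinite)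
    refine h2.congr ?_
    intro p
    simp [Function.comp]
  
lemma Icc_le_c0 :
    BorelReducible
      (fun x y : ℕ → (Set.Icc (0:ℝ) 1) =>
        Tendsto (fun n => |(x n : ℝ) - (y n : ℝ)|) atTop (𝓝 0))
      (fun x y : ℕ → ℝ => Tendsto (fun n => |x n - y n|) atTop (𝓝 0)) := by
  refine ⟨fun x n => (x n : ℝ), ?_, ?_⟩
  · exact measurable_pi_lambda _ (fun n => measurable_subtype_coe.comp (measurable_pi_apply n))
  · intro x y; exact Iff.rfl

lemma c0_le_Icc :
    BorelReducible
      (fun x y : ℕ → ℝ => Tendsto (fun n => |x n - y n|) atTop (𝓝 0))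
      (fun x y : ℕ → (Set.Icc (0:ℝ) 1) =>
        Tendsto (fun n => |(x n : ℝ) - (y n : ℝ)|) atTop (𝓝 0)) := by
  refine ⟨fun x m => ⟨clip (x (eNZ m).1 - (eNZ m).2),
      Set.mem_Icc.mpr ⟨clip_nonneg _, clip_le_one _⟩⟩, ?_, ?_⟩
  · refine measurable_pi_lambda _ (fun m => Measurable.subtype_mk ?_)
    exact continuous_clip.measurable.comp ((measurable_pi_apply _).sub measurable_const)
  · intro x y
    exact c0_iff_clipped x y

/-! ### Piecewise linear interpolation: `c₀ ≤ E_K` -/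

def interp (x : ℕ → ℝ) (t : ℝ) : ℝ :=
  x 0 + ∑ k ∈ Finset.range ⌈t⌉₊, (x (k+1) - x k) * clip (t - (k+1))

lemma interp_eq_sum (x : ℕ → ℝ) (t : ℝ) {M : ℕ} (hM : t ≤ M) :
    interp x t = x 0 + ∑ k ∈ Finset.range M, (x (k+1) - x k) * clip (t - (k+1)) := by
  unfold interp
  congr 1
  apply Finset.sum_subset
  · exact Finset.range_subset_range.mpr (Nat.ceil_le.mpr hM)
  · intro k hk hk'
    have hk2 : ⌈t⌉₊ ≤ k := le_of_not_gt (by simpa [Finset.mem_range] using hk')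
    have ht : t ≤ (k:ℝ) := le_trans (Nat.le_ceil t) (by exact_mod_cast hk2)
    rw [clip_of_nonpos (by push_cast; linarith), mul_zero]

lemma continuous_interp : Continuous (fun p : (ℕ → ℝ) × ℝ => interp p.1 p.2) := by
  rw [continuous_iff_continuousAt]
  rintro ⟨x0, t0⟩
  set M : ℕ := ⌈t0⌉₊ + 1 with hM
  have hcont : ContinuousAt (fun p : (ℕ → ℝ) × ℝ =>
      p.1 0 + ∑ k ∈ Finset.range M, (p.1 (k+1) - p.1 k) * clip (p.2 - (k+1))) (x0, t0) := by
    apply Continuous.continuousAt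
    refine ((continuous_apply 0).comp continuous_fst).add ?_
    refine continuous_finset_sum _ (fun k _ => ?_)
    exact (((continuous_apply (k+1)).comp continuous_fst).sub
      ((continuous_apply k).comp continuous_fst)).mul
      (continuous_clip.comp (continuous_snd.sub continuous_const))
  refine hcont.congr ?_
  have hopen : {p : (ℕ → ℝ) × ℝ | p.2 < M} ∈ 𝓝 (x0, t0) := by
    apply (isOpen_lt continuous_snd continuous_const).mem_nhds
    simp only [Set.mem_setOf_eq]
    calc t0 ≤ (⌈t0⌉₊:ℝ) := Nat.le_ceil t0
      _ < M := by rw [hM]; push_cast; linarith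
  filter_upwards [hopen] with p hp
  exact (interp_eq_sum p.1 p.2 (le_of_lt hp)).symm

lemma interp_formula (x : ℕ → ℝ) {t : ℝ} {m : ℕ} (h1 : (m:ℝ) + 1 ≤ t) (h2 : t ≤ (m:ℝ) + 2) :
    interp x t = x m + (t - ((m:ℝ)+1)) * (x (m+1) - x m) := by
  rw [interp_eq_sum x t (M := m + 2) (by push_cast; linarith)]
  rw [Finset.sum_range_succ, Finset.sum_range_succ]
  have e1 : clip (t - ((m+1 : ℕ)+1)) = 0 := clip_of_nonpos (by push_cast; linarith)
  have e2 : clip (t - ((m : ℕ)+1)) = t - ((m:ℝ)+1) :=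
    clip_of_mem (by push_cast; linarith) (by push_cast; linarith)
  have e3 : ∑ k ∈ Finset.range m, (x (k+1) - x k) * clip (t - (k+1))
      = ∑ k ∈ Finset.range m, (x (k+1) - x k) := by
    apply Finset.sum_congr rfl
    intro k hk
    have hk' : k < m := Finset.mem_range.mp hk
    have hk2 : (k:ℝ) + 1 ≤ (m:ℝ) := by exact_mod_cast Nat.succ_le_of_lt hk'
    rw [clip_of_one_le (by push_cast; linarith), mul_one]
  rw [e3, Finset.sum_range_sub, e1, e2]
  push_cast
  ring

def EKmap (x : ℕ → ℝ) : C(Set.Ioi (0:ℝ), ℝ) :=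
  ⟨fun t => interp x t,
    continuous_interp.comp (continuous_const.prodMk continuous_subtype_val)⟩

lemma continuous_EKmap : Continuous EKmap := by
  apply ContinuousMap.continuous_of_continuous_uncurry
  exact continuous_interp.comp
    (continuous_fst.prodMk (continuous_subtype_val.comp continuous_snd))

lemma convex_abs_le {a b s : ℝ} (h0 : 0 ≤ s) (h1 : s ≤ 1) :
    |a + s * (b - a)| ≤ max |a| |b| := by
  have he : a + s * (b - a) = (1 - s) * a + s * b := by ring
  rw [he]
  calc |(1-s)*a + s*b| ≤ |(1-s)*a| + |s*b| := abs_add_le _ _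
    _ = (1-s)*|a| + s*|b| := by
        rw [abs_mul, abs_mul, abs_of_nonneg (by linarith : (0:ℝ) ≤ 1 - s), abs_of_nonneg h0]
    _ ≤ (1-s)*(max |a| |b|) + s*(max |a| |b|) :=
        add_le_add (mul_le_mul_of_nonneg_left (le_max_left _ _) (by linarith))
          (mul_le_mul_of_nonneg_left (le_max_right _ _) h0)
    _ = max |a| |b| := by ring

lemma c0_le_EK :
    BorelReducible
      (fun x y : ℕ → ℝ => Tendsto (fun n => |x n - y n|) atTop (𝓝 0))
      (fun f g : C(Set.Ioi (0:ℝ), ℝ) => Tendsto (fun t => f t - g t) atTop (𝓝 0)) := by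
  refine ⟨EKmap, continuous_EKmap.measurable, ?_⟩
  intro x y
  constructor
  · intro h
    show Tendsto (fun t => EKmap x t - EKmap y t) atTop (𝓝 (0:ℝ))
    rw [Metric.tendsto_nhds]
    intro ε hε
    obtain ⟨N, hN⟩ := Metric.tendsto_atTop.mp h ε hε
    have hN' : ∀ n ≥ N, |x n - y n| < ε := by
      intro n hn
      have := hN n hn
      rwa [Real.dist_eq, sub_zero, abs_abs] at this
    rw [eventually_atTop]
    refine ⟨⟨(N:ℝ) + 1, Set.mem_Ioi.mpr (by positivity)⟩, ?_⟩
    rintro ⟨t, htpos⟩ ht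
    have htc : (N:ℝ) + 1 ≤ t := Subtype.mk_le_mk.mp ht
    set n := ⌊t⌋₊ with hn
    have hn1 : N + 1 ≤ n := Nat.le_floor (by exact_mod_cast htc)
    obtain ⟨m, hm⟩ : ∃ m, n = m + 1 := ⟨n - 1, by omega⟩
    have hnt : (n:ℝ) ≤ t := Nat.floor_le (by linarith [Set.mem_Ioi.mp htpos])
    have hnt' : t < (n:ℝ) + 1 := Nat.lt_floor_add_one t
    have hf1 : (m:ℝ) + 1 ≤ t := by rw [hm] at hnt; push_cast at hnt; linarith
    have hf2 : t ≤ (m:ℝ) + 2 := by rw [hm] at hnt'; push_cast at hnt'; linarith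
    have hx := interp_formula x hf1 hf2
    have hy := interp_formula y hf1 hf2
    rw [Real.dist_eq, sub_zero]
    have heq : EKmap x ⟨t, htpos⟩ - EKmap y ⟨t, htpos⟩
        = (x m - y m) + (t - ((m:ℝ)+1)) * ((x (m+1) - y (m+1)) - (x m - y m)) := by
      show interp x t - interp y t = _
      rw [hx, hy]; ring
    rw [heq]
    have hb := convex_abs_le (a := x m - y m) (b := x (m+1) - y (m+1))
      (s := t - ((m:ℝ)+1)) (by linarith) (by linarith)
    have h1 : |x m - y m| < ε := hN' m (by omega)
    have h2 : |x (m+1) - y (m+1)| < ε := hN' (m+1) (by omega)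
    exact lt_of_le_of_lt hb (max_lt h1 h2)
  · intro h
    have h' : Tendsto (fun t => EKmap x t - EKmap y t) atTop (𝓝 (0:ℝ)) := h
    have hseq : Tendsto (fun m : ℕ => (⟨(m:ℝ) + 1, Set.mem_Ioi.mpr (by positivity)⟩ : Set.Ioi (0:ℝ)))
        atTop atTop := by
      rw [tendsto_atTop]
      intro b
      obtain ⟨K, hK⟩ := exists_nat_ge (b:ℝ)
      rw [eventually_atTop]
      refine ⟨K, fun m hmK => ?_⟩
      have : (b:ℝ) ≤ (m:ℝ) + 1 := by
        have : (K:ℝ) ≤ (m:ℝ) := by exact_mod_cast hmK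
        linarith
      exact this
    have h2 := h'.comp hseq
    have h4 : Tendsto (fun m : ℕ => x m - y m) atTop (𝓝 0) := by
      refine h2.congr (fun m => ?_)
      show interp x ((m:ℝ)+1) - interp y ((m:ℝ)+1) = x m - y m
      rw [interp_formula x (le_refl _) (by linarith), interp_formula y (le_refl _) (by linarith)]
      ring
    have h5 := h4.abs
    simpa using h5

/-! ### An Aharoni-type family of Lipschitz functionals on `C([0,1], ℝ)` -/

abbrev YS := C(Set.Icc (0:ℝ) 1, ℝ)

def ds : ℕ → YS := TopologicalSpace.denseSeq YS

lemma ds_dense : ∀ (u : YS), ∀ r > 0, ∃ i, dist u (ds i) < r := by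
  have := TopologicalSpace.denseRange_denseSeq YS
  rw [Metric.denseRange_iff] at this
  exact this

/-- scales -/
def sc (k : ℕ) : ℝ := (1/2)^(k+2)
/-- margins -/
def sd (k : ℕ) : ℝ := sc k * sc k

lemma sc_pos (k : ℕ) : 0 < sc k := by unfold sc; positivity
lemma sd_pos (k : ℕ) : 0 < sd k := mul_pos (sc_pos k) (sc_pos k)
lemma sc_le_quarter (k : ℕ) : sc k ≤ 1/4 := by
  unfold sc
  calc (1/2:ℝ)^(k+2) ≤ (1/2:ℝ)^2 :=
        pow_le_pow_of_le_one (by norm_num) (by norm_num) (by omega)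
    _ = 1/4 := by norm_num
lemma sd_le_sc (k : ℕ) : sd k ≤ sc k := by
  have h1 := sc_pos k
  have h2 := sc_le_quarter k
  unfold sd; nlinarith
lemma r1_pos (k : ℕ) : 0 < sc k - 3 * sd k := by
  have h1 := sc_pos k
  have h2 := sc_le_quarter k
  unfold sd; nlinarith
lemma r2_pos (k : ℕ) : 0 < sc k - 2 * sd k := by
  have := r1_pos k; have := sd_pos k; linarith

/-- the hollowed balls -/
def USet (k i : ℕ) : Set YS :=
  Metric.ball (ds i) (sc k) ∩
    ⋂ m ∈ Finset.range i, (Metric.closedBall (ds m) (sc k - 3 * sd k))ᶜ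

/-- the coordinate functionals -/
def phi (k i : ℕ) (u : YS) : ℝ := min (sc k) (Metric.infDist u (USet k i)ᶜ)

lemma phi_nonneg (k i : ℕ) (u : YS) : 0 ≤ phi k i u :=
  le_min (sc_pos k).le Metric.infDist_nonneg

lemma phi_le (k i : ℕ) (u : YS) : phi k i u ≤ sc k := min_le_left _ _

lemma min_const_lip (c a b : ℝ) : |min c a - min c b| ≤ |a - b| := by
  rcases le_total a b with h | h
  · have h1 : min c a ≤ min c b := min_le_min le_rfl h
    have h2 : min c b ≤ min c a + (b - a) := by
      rcases le_total c a with hc | hc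
      · rw [min_eq_left hc]; have := min_le_left c b; linarith
      · rw [min_eq_right hc]; have := min_le_right c b; linarith
    have hab : |a - b| = b - a := by rw [abs_sub_comm]; exact abs_of_nonneg (by linarith)
    rw [abs_sub_le_iff]
    constructor <;> linarith
  · have h1 : min c b ≤ min c a := min_le_min le_rfl h
    have h2 : min c a ≤ min c b + (a - b) := by
      rcases le_total c b with hc | hc
      · rw [min_eq_left hc]; have := min_le_left c a; linarith
      · rw [min_eq_right hc]; have := min_le_right c a; linarith
    have hab : |a - b| = a - b := abs_of_nonneg (by linarith)
    rw [abs_sub_le_iff]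
    constructor <;> linarith

lemma infDist_lip (s : Set YS) (u v : YS) :
    |Metric.infDist u s - Metric.infDist v s| ≤ dist u v := by
  rw [abs_sub_le_iff]
  constructor
  · have := Metric.infDist_le_infDist_add_dist (s := s) (x := u) (y := v); linarith
  · have := Metric.infDist_le_infDist_add_dist (s := s) (x := v) (y := u)
    rw [dist_comm] at this; linarith

lemma phi_lip (k i : ℕ) (u v : YS) : |phi k i u - phi k i v| ≤ dist u v :=
  le_trans (min_const_lip _ _ _) (infDist_lip _ u v)

lemma phi_continuous (k i : ℕ) : Continuous (phi k i) := by
  have : LipschitzWith 1 (phi k i) := by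
    apply LipschitzWith.of_dist_le_mul
    intro u v
    rw [Real.dist_eq, NNReal.coe_one, one_mul]
    exact phi_lip k i u v
  exact this.continuous

lemma phi_pos_mem {k i : ℕ} {u : YS} (h : 0 < phi k i u) : u ∈ USet k i := by
  by_contra hu
  have : Metric.infDist u (USet k i)ᶜ = 0 :=
    Metric.infDist_zero_of_mem (Set.mem_compl hu)
  rw [phi, this] at h
  simp at h

lemma mem_USet_iff {k i : ℕ} {u : YS} :
    u ∈ USet k i ↔ dist u (ds i) < sc k ∧ ∀ m < i, sc k - 3 * sd k < dist u (ds m) := by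
  unfold USet
  rw [Set.mem_inter_iff, Metric.mem_ball]
  apply and_congr Iff.rfl
  constructor
  · intro h m hm
    have := Set.mem_iInter₂.mp h m (Finset.mem_range.mpr hm)
    rw [Set.mem_compl_iff, Metric.mem_closedBall] at this
    linarith [not_le.mp this]
  · intro h
    apply Set.mem_iInter₂.mpr
    intro m hm
    rw [Set.mem_compl_iff, Metric.mem_closedBall]
    exact not_le.mpr (h m (Finset.mem_range.mp hm))

/-- per-point finiteness at a fixed scale -/
lemma active_finite (k : ℕ) (u : YS) : {i | 0 < phi k i u}.Finite := by
  obtain ⟨n₁, hn₁⟩ := ds_dense u (sc k - 3 * sd k) (r1_pos k)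
  refine (Set.finite_le_nat n₁).subset ?_
  intro i hi
  simp only [Set.mem_setOf_eq] at hi ⊢
  by_contra hgt
  push_neg at hgt
  have hmem := (mem_USet_iff.mp (phi_pos_mem hi)).2 n₁ hgt
  linarith

/-- global per-point finiteness -/
lemma global_finite (u : YS) {γ : ℝ} (hγ : 0 < γ) :
    {p : ℕ × ℕ | γ ≤ phi p.1 p.2 u}.Finite := by
  obtain ⟨K, hK⟩ := exists_pow_lt_of_lt_one hγ (by norm_num : (1/2:ℝ) < 1)
  have hks : {k : ℕ | γ ≤ sc k}.Finite := by
    refine (Set.finite_le_nat K).subset ?_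
    intro k hk
    simp only [Set.mem_setOf_eq] at hk ⊢
    by_contra hgt
    push_neg at hgt
    have : sc k ≤ (1/2:ℝ)^K := by
      unfold sc
      exact pow_le_pow_of_le_one (by norm_num) (by norm_num) (by omega)
    linarith
  refine (hks.biUnion (fun k _ => ((active_finite k u).image (fun i => (k, i))))).subset ?_
  intro p hp
  simp only [Set.mem_setOf_eq] at hp
  have hk : γ ≤ sc p.1 := le_trans hp (phi_le _ _ _)
  have hi : 0 < phi p.1 p.2 u := lt_of_lt_of_le hγ hp
  exact Set.mem_biUnion hk ⟨p.2, hi, rfl⟩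

lemma le_infDist' {s : Set YS} {a : YS} {r : ℝ} (hr : 0 ≤ r) (hs : s.Nonempty)
    (h : ∀ z ∈ s, r ≤ dist a z) : r ≤ Metric.infDist a s := by
  by_contra hlt
  push_neg at hlt
  obtain ⟨z, hz, hdz⟩ := (Metric.infDist_lt_iff hs).mp hlt
  exact absurd (h z hz) (not_le.mpr hdz)

/-- the key separation property -/
lemma phi_sep (k : ℕ) {a b : YS} (h : 2 * sc k ≤ dist a b) :
    ∃ i, sd k ≤ |phi k i a - phi k i b| := by
  have hsd := sd_pos k
  have hex : ∃ i, dist a (ds i) ≤ sc k - 2 * sd k := by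
    obtain ⟨i, hi⟩ := ds_dense a _ (r2_pos k)
    exact ⟨i, hi.le⟩
  classical
  set n₀ := Nat.find hex with hn₀
  have h₀ : dist a (ds n₀) ≤ sc k - 2 * sd k := Nat.find_spec hex
  have hmin : ∀ m < n₀, sc k - 2 * sd k < dist a (ds m) := by
    intro m hm
    have := Nat.find_min hex hm
    push_neg at this
    exact this
  refine ⟨n₀, ?_⟩
  -- φ vanishes at b
  have hbmem : b ∈ (USet k n₀)ᶜ := by
    rw [Set.mem_compl_iff]
    intro hb
    have hb1 := (mem_USet_iff.mp hb).1
    have htri : dist a b ≤ dist a (ds n₀) + dist b (ds n₀) := by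
      rw [dist_comm b (ds n₀)]; exact dist_triangle a (ds n₀) b
    have := sd_pos k
    linarith
  have hphib : phi k n₀ b = 0 := by
    rw [phi, Metric.infDist_zero_of_mem hbmem]
    exact min_eq_right (sc_pos k).le
  -- φ is at least `sd k` at a
  have hne : ((USet k n₀)ᶜ).Nonempty := ⟨b, hbmem⟩
  have hphia : sd k ≤ phi k n₀ a := by
    apply le_min (sd_le_sc k)
    apply le_infDist' (sd_pos k).le hne
    intro z hz
    rw [Set.mem_compl_iff, mem_USet_iff] at hz
    push_neg at hz
    by_cases hzball : dist z (ds n₀) < sc k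
    · obtain ⟨m, hm, hmz⟩ := hz hzball
      have h1 : sc k - 2 * sd k < dist a (ds m) := hmin m hm
      have htri : dist a (ds m) ≤ dist a z + dist z (ds m) := dist_triangle _ _ _
      linarith
    · push_neg at hzball
      have htri : dist z (ds n₀) ≤ dist z a + dist a (ds n₀) := dist_triangle _ _ _
      rw [dist_comm z a] at htri
      linarith
  rw [hphib, sub_zero, abs_of_nonneg (phi_nonneg _ _ _)]
  exact hphia

/-! ### Slot restrictions -/

def iotaMap (n : ℕ) : C(Set.Icc (0:ℝ) 1, Set.Ioi (0:ℝ)) :=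
  ⟨fun s => ⟨(n:ℝ) + 1 + s, Set.mem_Ioi.mpr (by
      have h1 := s.2.1
      have h2 : (0:ℝ) ≤ (n:ℝ) := Nat.cast_nonneg n
      linarith)⟩,
   by
     apply Continuous.subtype_mk
     exact continuous_const.add continuous_subtype_val⟩

def res (n : ℕ) (f : C(Set.Ioi (0:ℝ), ℝ)) : YS := f.comp (iotaMap n)

lemma continuous_res (n : ℕ) : Continuous (res n) :=
  ContinuousMap.continuous_precomp _

lemma EK_iff_res (f g : C(Set.Ioi (0:ℝ), ℝ)) :
    Tendsto (fun t => f t - g t) atTop (𝓝 0) ↔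
      Tendsto (fun n => dist (res n f) (res n g)) atTop (𝓝 0) := by
  constructor
  · intro h
    rw [Metric.tendsto_atTop]
    intro ε hε
    obtain ⟨T, hT⟩ := Metric.tendsto_atTop.mp h (ε/2) (by linarith)
    obtain ⟨N, hN⟩ := exists_nat_ge (T:ℝ)
    refine ⟨N, fun n hn => ?_⟩
    rw [Real.dist_eq, sub_zero, abs_of_nonneg dist_nonneg]
    have hd : dist (res n f) (res n g) ≤ ε/2 := by
      rw [ContinuousMap.dist_le (by linarith)]
      intro s
      have hTs : T ≤ iotaMap n s := by
        have hs0 : (0:ℝ) ≤ (s:ℝ) := s.2.1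
        have hnN : (N:ℝ) ≤ (n:ℝ) := by exact_mod_cast hn
        have : (T:ℝ) ≤ (n:ℝ) + 1 + (s:ℝ) := by linarith
        exact this
      have hval := hT (iotaMap n s) hTs
      rw [Real.dist_eq, sub_zero] at hval
      show dist (f (iotaMap n s)) (g (iotaMap n s)) ≤ ε/2
      rw [Real.dist_eq]
      exact hval.le
    linarith
  · intro h
    rw [Metric.tendsto_atTop]
    intro ε hε
    obtain ⟨N, hN⟩ := Metric.tendsto_atTop.mp h (ε/2) (by linarith)
    refine ⟨⟨(N:ℝ)+1, Set.mem_Ioi.mpr (by positivity)⟩, ?_⟩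
    rintro ⟨t, htpos⟩ ht
    have htc : (N:ℝ)+1 ≤ t := Subtype.mk_le_mk.mp ht
    set n := ⌊t⌋₊ with hndef
    have hn1 : N + 1 ≤ n := Nat.le_floor (by exact_mod_cast htc)
    obtain ⟨m, hm⟩ : ∃ m, n = m + 1 := ⟨n-1, by omega⟩
    have hnt : (n:ℝ) ≤ t := Nat.floor_le (by linarith [Set.mem_Ioi.mp htpos])
    have hnt' : t < (n:ℝ)+1 := Nat.lt_floor_add_one t
    have hf1 : (m:ℝ)+1 ≤ t := by rw [hm] at hnt; push_cast at hnt; linarith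
    have hf2 : t ≤ (m:ℝ)+2 := by rw [hm] at hnt'; push_cast at hnt'; linarith
    have hs : t - ((m:ℝ)+1) ∈ Set.Icc (0:ℝ) 1 := Set.mem_Icc.mpr ⟨by linarith, by linarith⟩
    have hdist := hN m (by omega)
    rw [Real.dist_eq, sub_zero, abs_of_nonneg dist_nonneg] at hdist
    have hpt : iotaMap m ⟨t - ((m:ℝ)+1), hs⟩ = ⟨t, htpos⟩ := by
      apply Subtype.ext
      show (m:ℝ) + 1 + (t - ((m:ℝ)+1)) = t
      ring
    have happ := ContinuousMap.dist_apply_le_dist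
      (f := res m f) (g := res m g) ⟨t - ((m:ℝ)+1), hs⟩
    have e1 : res m f ⟨t - ((m:ℝ)+1), hs⟩ = f ⟨t, htpos⟩ := by
      show f (iotaMap m ⟨t - ((m:ℝ)+1), hs⟩) = f ⟨t, htpos⟩
      rw [hpt]
    have e2 : res m g ⟨t - ((m:ℝ)+1), hs⟩ = g ⟨t, htpos⟩ := by
      show g (iotaMap m ⟨t - ((m:ℝ)+1), hs⟩) = g ⟨t, htpos⟩
      rw [hpt]
    rw [e1, e2, Real.dist_eq] at happ
    rw [Real.dist_eq, sub_zero]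
    calc |f ⟨t,htpos⟩ - g ⟨t,htpos⟩| ≤ dist (res m f) (res m g) := happ
      _ < ε := by linarith

/-! ### The pairing argument -/

def eI : ℕ ≃ ℕ × ℕ × ℕ := (Denumerable.eqv (ℕ × ℕ × ℕ)).symm

lemma pair_iff (u v : ℕ → YS) :
    Tendsto (fun n => dist (u n) (v n)) atTop (𝓝 0) ↔
      Tendsto (fun j => |phi (eI j).2.1 (eI j).2.2 (u (eI j).1)
        - phi (eI j).2.1 (eI j).2.2 (v (eI j).1)|) atTop (𝓝 0) := by
  set F : ℕ × ℕ × ℕ → ℝ :=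
    fun q => |phi q.2.1 q.2.2 (u q.1) - phi q.2.1 q.2.2 (v q.1)| with hFdef
  have hF0 : ∀ q, 0 ≤ F q := fun q => abs_nonneg _
  have key : Tendsto (fun n => dist (u n) (v n)) atTop (𝓝 0) ↔
      Tendsto F cofinite (𝓝 0) := by
    constructor
    · intro h
      have hx := (tendsto_atTop_zero_iff _ (fun n => dist_nonneg)).mp h
      rw [tendsto_cofinite_zero_iff F hF0]
      intro ε hε
      have hS := hx ε hε
      refine Set.Finite.subset (hS.biUnion (fun n _ =>
        (((global_finite (u n) hε).union (global_finite (v n) hε)).image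
          (fun p => (n, p))))) ?_
      intro q hq
      simp only [Set.mem_setOf_eq] at hq
      have h1 : ε ≤ dist (u q.1) (v q.1) := le_trans hq (phi_lip _ _ _ _)
      have h2 : ε ≤ phi q.2.1 q.2.2 (u q.1) ∨ ε ≤ phi q.2.1 q.2.2 (v q.1) := by
        rcases le_total (phi q.2.1 q.2.2 (u q.1)) (phi q.2.1 q.2.2 (v q.1)) with hle | hle
        · right
          have hA := phi_nonneg q.2.1 q.2.2 (u q.1)
          have he : F q = phi q.2.1 q.2.2 (v q.1) - phi q.2.1 q.2.2 (u q.1) := by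
            rw [show F q = |phi q.2.1 q.2.2 (u q.1) - phi q.2.1 q.2.2 (v q.1)| from rfl,
              abs_sub_comm]
            exact abs_of_nonneg (by linarith)
          rw [he] at hq
          linarith
        · left
          have hB := phi_nonneg q.2.1 q.2.2 (v q.1)
          have he : F q = phi q.2.1 q.2.2 (u q.1) - phi q.2.1 q.2.2 (v q.1) := by
            rw [show F q = |phi q.2.1 q.2.2 (u q.1) - phi q.2.1 q.2.2 (v q.1)| from rfl]
            exact abs_of_nonneg (by linarith)
          rw [he] at hq
          linarith
      refine Set.mem_biUnion h1 ?_
      refine ⟨q.2, ?_, rfl⟩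
      rcases h2 with h2 | h2
      · exact Set.mem_union_left _ h2
      · exact Set.mem_union_right _ h2
    · intro hFc
      rw [tendsto_atTop_zero_iff _ (fun n => dist_nonneg)]
      intro ε hε
      obtain ⟨k, hk⟩ : ∃ k, 2 * sc k ≤ ε := by
        obtain ⟨K, hK⟩ := exists_pow_lt_of_lt_one (half_pos hε) (by norm_num : (1/2:ℝ) < 1)
        refine ⟨K, ?_⟩
        have hle : sc K ≤ (1/2:ℝ)^K := by
          unfold sc
          exact pow_le_pow_of_le_one (by norm_num) (by norm_num) (by omega)
        linarith
      have hfin : {q | sd k ≤ F q}.Finite :=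
        (tendsto_cofinite_zero_iff F hF0).mp hFc (sd k) (sd_pos k)
      refine (hfin.image Prod.fst).subset ?_
      intro n hn
      simp only [Set.mem_setOf_eq] at hn
      obtain ⟨i, hi⟩ := phi_sep k (le_trans hk hn)
      exact ⟨(n, k, i), hi, rfl⟩
  rw [key]
  constructor
  · intro hFc
    have := hFc.comp ((eI : ℕ ≃ ℕ × ℕ × ℕ).injective.tendsto_cofinite)
    rw [Nat.cofinite_eq_atTop] at this
    exact this
  · intro h
    have h' : Tendsto (F ∘ eI) cofinite (𝓝 0) := by
      rw [Nat.cofinite_eq_atTop]; exact h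
    have h2 := h'.comp ((eI.symm).injective.tendsto_cofinite)
    refine h2.congr ?_
    intro q
    simp [Function.comp]

/-! ### The reduction `E_K ≤ c₀` -/

def theta (f : C(Set.Ioi (0:ℝ), ℝ)) : ℕ → ℝ :=
  fun j => phi (eI j).2.1 (eI j).2.2 (res (eI j).1 f)

lemma EK_le_c0 :
    BorelReducible
      (fun f g : C(Set.Ioi (0:ℝ), ℝ) => Tendsto (fun t => f t - g t) atTop (𝓝 0))
      (fun x y : ℕ → ℝ => Tendsto (fun n => |x n - y n|) atTop (𝓝 0)) := by
  refine ⟨theta, ?_, ?_⟩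
  · refine measurable_pi_lambda _ (fun j => ?_)
    exact ((phi_continuous _ _).comp (continuous_res _)).measurable
  · intro f g
    show Tendsto (fun t => f t - g t) atTop (𝓝 0) ↔
      Tendsto (fun j => |theta f j - theta g j|) atTop (𝓝 0)
    rw [EK_iff_res f g, pair_iff (fun n => res n f) (fun n => res n g)]
    exact Iff.rfl

end EKProof

theorem EK_and_E_unitInterval_bireducible_c0 :
    BorelBireducible
      (fun f g : C(Set.Ioi (0:ℝ), ℝ) => Tendsto (fun t => f t - g t) atTop (𝓝 0))
      (fun x y : ℕ → ℝ => Tendsto (fun n => |x n - y n|) atTop (𝓝 0)) ∧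
    BorelBireducible
      (fun x y : ℕ → (Set.Icc (0:ℝ) 1) =>
        Tendsto (fun n => |(x n : ℝ) - (y n : ℝ)|) atTop (𝓝 0))
      (fun x y : ℕ → ℝ => Tendsto (fun n => |x n - y n|) atTop (𝓝 0)) :=
  ⟨⟨EKProof.EK_le_c0, EKProof.c0_le_EK⟩, ⟨EKProof.Icc_le_c0, EKProof.c0_le_Icc⟩⟩
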